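/- Let R = ℝ + X·ℂ[[X]] ⊆ S = ℂ[[X]], and B = R[Y,Z]. Define the S-derivation D̃ on S[Y,Z] by D̃(Y) = iX and D̃(Z) = −X, and let D be its restriction to B. Then D is a locally nilpotent R-derivation of B, and the ideal D(B)B = (iX, −X)B ∩ B has grade 1 on B (in particular D(B)B is a proper ideal of B contained in XS[Y,Z] ∩ B). -/

import Mathlib

open scoped Classical

/-- The grade of an ideal `I` of a commutative ring `S`: the length of a maximal
`S`-regular sequence contained in `I` when `I ≠ S`, and `∞` when `I = S`. -/
noncomputable def Ideal.grade {S : Type*} [CommRing S] (I : Ideal S) : ℕ∞ :=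
  if I = ⊤ then ⊤
  else ↑(sSup {n : ℕ | ∃ rs : List S, rs.length = n ∧
    RingTheory.Sequence.IsRegular S rs ∧ ∀ x ∈ rs, x ∈ I})

set_option synthInstance.maxHeartbeats 1000000
set_option maxHeartbeats 1000000

noncomputable section

/-- `R = ℝ + X·ℂ[[X]]`, the subring of `S = ℂ[[X]]` of power series with real constant
term. -/
def Rsub : Subalgebra ℝ (PowerSeries ℂ) where
  carrier := {f | (PowerSeries.constantCoeff f).im = 0}
  mul_mem' := by
    intro f g hf hg
    simp only [Set.mem_setOf_eq, map_mul, Complex.mul_im] at *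
    rw [hf, hg]
    ring
  add_mem' := by
    intro f g hf hg
    simp only [Set.mem_setOf_eq, map_add, Complex.add_im] at *
    rw [hf, hg]
    ring
  one_mem' := by simp [Set.mem_setOf_eq]
  zero_mem' := by simp [Set.mem_setOf_eq]
  algebraMap_mem' := fun r => by
    simp [Set.mem_setOf_eq, PowerSeries.algebraMap_apply]

/-- `iX ∈ R`. -/
def iX : Rsub := ⟨PowerSeries.C Complex.I * PowerSeries.X, by
  change (PowerSeries.constantCoeff (PowerSeries.C Complex.I * PowerSeries.X)).im = 0
  simp⟩

/-- `-X ∈ R`. -/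
def negX : Rsub := ⟨-PowerSeries.X, by
  change (PowerSeries.constantCoeff (-PowerSeries.X : PowerSeries ℂ)).im = 0
  simp⟩

/-- The derivation `D` on `B = R[Y,Z]` (with `Y = X 0`, `Z = X 1`) determined by
`D(Y) = iX` and `D(Z) = -X`; it is the restriction to `B` of the `S`-derivation `D̃` on
`S[Y,Z]` with `D̃(Y) = iX`, `D̃(Z) = -X`. -/
def Dder : Derivation (Rsub) (MvPolynomial (Fin 2) Rsub) (MvPolynomial (Fin 2) Rsub) :=
  MvPolynomial.mkDerivation _ ![MvPolynomial.C iX, MvPolynomial.C negX]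

-- ===================== auxiliary material =====================

local notation "B" => MvPolynomial (Fin 2) Rsub
local notation "A₀" => (MvPolynomial.C iX : MvPolynomial (Fin 2) Rsub)
local notation "B₀" => (MvPolynomial.C negX : MvPolynomial (Fin 2) Rsub)

lemma Dder_X (i : Fin 2) : Dder (MvPolynomial.X i) = ![A₀, B₀] i := by
  simp [Dder, MvPolynomial.mkDerivation_X]

lemma hAB : A₀ ^ 2 + B₀ ^ 2 = 0 := by
  rw [← map_pow, ← map_pow, ← map_add]
  have : iX ^ 2 + negX ^ 2 = 0 := by
    apply Subtype.ext
    show (PowerSeries.C Complex.I * PowerSeries.X) ^ 2 + (-PowerSeries.X) ^ 2 = 0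
    rw [mul_pow, ← map_pow, Complex.I_sq, map_neg, map_one]
    ring
  rw [this, map_zero]

-- the evaluation homomorphism killing iX, negX, Y, Z
def psi : Rsub →+* ℂ :=
  (PowerSeries.constantCoeff).comp (Subalgebra.val Rsub).toRingHom

def phi : B →+* ℂ := MvPolynomial.eval₂Hom psi 0

lemma phi_A : phi A₀ = 0 := by
  simp [phi, psi, iX]

lemma phi_B : phi B₀ = 0 := by
  simp [phi, psi, negX]

lemma iX_ne : iX ≠ 0 := by
  intro h
  have := congrArg (fun f => PowerSeries.coeff 1 f.val) h
  simp [iX] at this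

-- local nilpotency
lemma pow_zero_stable (n k : ℕ) (p : B) (h : (Dder.toLinearMap ^ n) p = 0) :
    (Dder.toLinearMap ^ (k + n)) p = 0 := by
  rw [pow_add, Module.End.mul_apply, h, map_zero]

lemma nilp_mul_X (i : Fin 2) : ∀ (n : ℕ) (p : B), (Dder.toLinearMap ^ n) p = 0 →
    (Dder.toLinearMap ^ (n + 1)) (p * MvPolynomial.X i) = 0 := by
  intro n
  induction n with
  | zero =>
    intro p h
    simp only [pow_zero, Module.End.one_apply] at h
    rw [h, zero_mul, map_zero]
  | succ n ih =>
    intro p h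
    have hd : (Dder.toLinearMap ^ (n + 2)) (p * MvPolynomial.X i)
        = (Dder.toLinearMap ^ (n + 1)) (Dder (p * MvPolynomial.X i)) := by
      rw [pow_succ (Dder.toLinearMap) (n+1), Module.End.mul_apply]
      rfl
    rw [hd, Derivation.leibniz]
    have h1 : p • Dder (MvPolynomial.X i) = (![iX, negX] i) • p := by
      rw [Dder_X]
      fin_cases i <;>
        simp [smul_eq_mul, MvPolynomial.smul_eq_C_mul, mul_comm]
    rw [map_add]
    have h2 : (Dder.toLinearMap ^ (n + 1)) (p • Dder (MvPolynomial.X i)) = 0 := by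
      rw [h1, map_smul]
      have hn : (Dder.toLinearMap ^ (n+1)) p = 0 := h
      rw [hn, smul_zero]
    have h3 : (Dder.toLinearMap ^ (n + 1)) ((MvPolynomial.X i : MvPolynomial (Fin 2) Rsub) • Dder p) = 0 := by
      have hp : (Dder.toLinearMap ^ n) (Dder p) = 0 := by
        have := h
        rwa [pow_succ Dder.toLinearMap n, Module.End.mul_apply] at this
      have := ih (Dder p) hp
      simpa [smul_eq_mul, mul_comm] using this
    rw [h2, h3, add_zero]

lemma locally_nilpotent : ∀ b : B, ∃ n : ℕ, (Dder.toLinearMap ^ n) b = 0 := by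
  intro b
  induction b using MvPolynomial.induction_on with
  | C a =>
    exact ⟨1, by
      simp only [pow_one]
      have : (MvPolynomial.C a : B) = algebraMap Rsub B a := rfl
      rw [this]
      exact Derivation.map_algebraMap Dder a⟩
  | add p q hp hq =>
    obtain ⟨n, hn⟩ := hp
    obtain ⟨m, hm⟩ := hq
    refine ⟨m + n, ?_⟩
    rw [map_add, pow_zero_stable n m p hn, zero_add, add_comm]
    exact pow_zero_stable m n q hm
  | mul_X p i hp =>
    obtain ⟨n, hn⟩ := hp
    exact ⟨n + 1, nilp_mul_X i n p hn⟩

-- span equality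
lemma span_eq : Ideal.span (Set.range (Dder : B → B)) = Ideal.span ({A₀, B₀} : Set B) := by
  apply le_antisymm
  · rw [Ideal.span_le]
    rintro _ ⟨b, rfl⟩
    induction b using MvPolynomial.induction_on with
    | C a =>
      have : (MvPolynomial.C a : B) = algebraMap Rsub B a := rfl
      rw [this, Derivation.map_algebraMap]
      exact Ideal.zero_mem _
    | add p q hp hq =>
      rw [map_add]; exact Ideal.add_mem _ hp hq
    | mul_X p i hp =>
      rw [Derivation.leibniz]
      apply Ideal.add_mem
      · rw [smul_eq_mul]
        apply Ideal.mul_mem_left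
        rw [Dder_X]
        fin_cases i
        · exact Ideal.subset_span (Set.mem_insert _ _)
        · exact Ideal.subset_span (Set.mem_insert_of_mem _ rfl)
      · rw [smul_eq_mul]
        exact Ideal.mul_mem_left _ _ hp
  · rw [Ideal.span_le]
    rintro x hx
    rcases hx with rfl | hx
    · exact Ideal.subset_span ⟨MvPolynomial.X 0, by rw [Dder_X]; rfl⟩
    · rcases hx with rfl
      exact Ideal.subset_span ⟨MvPolynomial.X 1, by rw [Dder_X]; rfl⟩

lemma span_ne_top : Ideal.span ({A₀, B₀} : Set B) ≠ ⊤ := by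
  intro h
  have h1 : (1 : B) ∈ Ideal.span ({A₀, B₀} : Set B) := h ▸ Submodule.mem_top
  rw [Ideal.mem_span_pair] at h1
  obtain ⟨p, q, hpq⟩ := h1
  have := congrArg phi hpq
  rw [map_add, map_mul, map_mul, phi_A, phi_B, map_one] at this
  simp at this

open scoped Pointwise

lemma smul_top_eq_span (a : B) : (a • (⊤ : Submodule (MvPolynomial (Fin 2) Rsub) (MvPolynomial (Fin 2) Rsub))) = Ideal.span {a} := by
  rw [← Submodule.ideal_span_singleton_smul, smul_eq_mul, Ideal.mul_top]

lemma mem_smul_top {a x : B} :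
    x ∈ (a • (⊤ : Submodule (MvPolynomial (Fin 2) Rsub) (MvPolynomial (Fin 2) Rsub))) ↔ ∃ y, a * y = x := by
  rw [smul_top_eq_span, Ideal.mem_span_singleton']
  constructor
  · rintro ⟨y, hy⟩; exact ⟨y, by rw [mul_comm]; exact hy⟩
  · rintro ⟨y, hy⟩; exact ⟨y, by rw [mul_comm]; exact hy⟩

lemma reg_ne_zero {a : B} (h : IsSMulRegular (MvPolynomial (Fin 2) Rsub) a) : a ≠ 0 := by
  rintro rfl
  have h01 : (0 : B) • (1 : B) = (0 : B) • (0 : B) := by simp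
  have := h h01
  simp at this

lemma A_ne_zero : A₀ ≠ 0 := fun h => iX_ne (by
  have := MvPolynomial.C_injective (Fin 2) Rsub (h.trans (map_zero _).symm)
  exact this)

lemma regular_A : IsSMulRegular (MvPolynomial (Fin 2) Rsub) A₀ := by
  intro x y hxy
  simp only [smul_eq_mul] at hxy
  exact mul_left_cancel₀ A_ne_zero hxy

lemma no_two (a b : B) (ha : a ∈ Ideal.span ({A₀, B₀} : Set (MvPolynomial (Fin 2) Rsub)))
    (hb : b ∈ Ideal.span ({A₀, B₀} : Set (MvPolynomial (Fin 2) Rsub)))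
    (hra : IsSMulRegular (MvPolynomial (Fin 2) Rsub) a)
    (hrb : IsSMulRegular (QuotSMulTop a (MvPolynomial (Fin 2) Rsub)) b) : False := by
  rw [Ideal.mem_span_pair] at ha hb
  obtain ⟨p, q, hpq⟩ := ha
  obtain ⟨p', q', hpq'⟩ := hb
  obtain ⟨c, hc⟩ : ∃ c : MvPolynomial (Fin 2) Rsub, c = p * B₀ - q * A₀ := ⟨_, rfl⟩
  obtain ⟨c', hc'⟩ : ∃ c' : MvPolynomial (Fin 2) Rsub, c' = p' * B₀ - q' * A₀ := ⟨_, rfl⟩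
  have hbc : b * c = a * c' := by
    rw [hc, hc', ← hpq, ← hpq']
    have expand : (p' * A₀ + q' * B₀) * (p * B₀ - q * A₀)
        = (p * A₀ + q * B₀) * (p' * B₀ - q' * A₀) + (p * q' - p' * q) * (A₀ ^ 2 + B₀ ^ 2) := by
      ring
    rw [hAB, mul_zero, add_zero] at expand
    exact expand
  have hac : A₀ * c = B₀ * a := by
    rw [hc, ← hpq]
    have expand : A₀ * (p * B₀ - q * A₀)
        = B₀ * (p * A₀ + q * B₀) + (-q) * (A₀ ^ 2 + B₀ ^ 2) := by
      ring
    rw [hAB, mul_zero, add_zero] at expand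
    exact expand
  -- b is a zerodivisor mod aB
  have hsm : b • (Submodule.Quotient.mk c : QuotSMulTop a (MvPolynomial (Fin 2) Rsub))
      = b • Submodule.Quotient.mk 0 := by
    rw [← Submodule.Quotient.mk_smul, ← Submodule.Quotient.mk_smul]
    refine (Submodule.Quotient.eq _).mpr ?_
    have hb0 : b • c - b • (0 : MvPolynomial (Fin 2) Rsub) = b * c := by simp [smul_eq_mul]
    rw [hb0, hbc]
    exact mem_smul_top.mpr ⟨c', rfl⟩
  have hmkc := hrb hsm
  have hcmem : c ∈ (a • (⊤ : Submodule (MvPolynomial (Fin 2) Rsub) (MvPolynomial (Fin 2) Rsub))) := by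
    have h2 := (Submodule.Quotient.eq _).mp hmkc
    convert h2 using 1
    exact (sub_zero c).symm
  obtain ⟨g, hg⟩ := mem_smul_top.mp hcmem
  -- hence A₀ * g = B₀
  have key : a * (A₀ * g - B₀) = 0 := by
    have : a * (A₀ * g - B₀) = A₀ * (a * g) - B₀ * a := by ring
    rw [this, hg, hac, sub_self]
  have hAgB : A₀ * g = B₀ := by
    rcases mul_eq_zero.mp key with h | h
    · exact absurd h (reg_ne_zero hra)
    · exact sub_eq_zero.mp h
  -- extract coefficient 0
  have hcoeff : iX * MvPolynomial.coeff 0 g = negX := by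
    have := congrArg (MvPolynomial.coeff 0) hAgB
    rwa [MvPolynomial.coeff_C_mul, MvPolynomial.coeff_C] at this
  have hval : (PowerSeries.C Complex.I * PowerSeries.X) * (MvPolynomial.coeff 0 g : Rsub).val
      = -PowerSeries.X := congrArg Subtype.val hcoeff
  have hco1 := congrArg (PowerSeries.coeff 1) hval
  rw [mul_assoc] at hco1
  have him : (PowerSeries.constantCoeff ((MvPolynomial.coeff 0 g : Rsub) : PowerSeries ℂ)).im = 0 :=
    (MvPolynomial.coeff 0 g).2
  rw [PowerSeries.coeff_C_mul] at hco1
  have hXmul : (PowerSeries.coeff 1) (PowerSeries.X * ((MvPolynomial.coeff 0 g : Rsub) : PowerSeries ℂ))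
      = PowerSeries.constantCoeff ((MvPolynomial.coeff 0 g : Rsub) : PowerSeries ℂ) := by
    rw [show (1 : ℕ) = 0 + 1 from rfl, PowerSeries.coeff_succ_X_mul, PowerSeries.coeff_zero_eq_constantCoeff]
  rw [hXmul, map_neg, PowerSeries.coeff_one_X] at hco1
  have := congrArg Complex.re hco1
  rw [Complex.mul_re, Complex.I_re, Complex.I_im, him] at this
  simp at this

lemma top_ne_A_smul : (⊤ : Submodule (MvPolynomial (Fin 2) Rsub) (MvPolynomial (Fin 2) Rsub))
    ≠ Ideal.ofList [A₀] • ⊤ := by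
  rw [Ideal.ofList_singleton, Submodule.ideal_span_singleton_smul]
  intro h
  have h1 : (1 : MvPolynomial (Fin 2) Rsub) ∈
      (A₀ • (⊤ : Submodule (MvPolynomial (Fin 2) Rsub) (MvPolynomial (Fin 2) Rsub))) :=
    h ▸ Submodule.mem_top
  obtain ⟨y, hy⟩ := mem_smul_top.mp h1
  have := congrArg phi hy
  rw [map_mul, phi_A, zero_mul, map_one] at this
  exact zero_ne_one this

lemma isRegular_singleton_A :
    RingTheory.Sequence.IsRegular (MvPolynomial (Fin 2) Rsub) [A₀] := by
  rw [RingTheory.Sequence.isRegular_iff]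
  refine ⟨?_, top_ne_A_smul⟩
  rw [RingTheory.Sequence.isWeaklyRegular_cons_iff]
  exact ⟨regular_A, by simp⟩

lemma grade_aux : sSup {n : ℕ | ∃ rs : List (MvPolynomial (Fin 2) Rsub), rs.length = n ∧
    RingTheory.Sequence.IsRegular (MvPolynomial (Fin 2) Rsub) rs ∧ ∀ x ∈ rs,
      x ∈ Ideal.span ({MvPolynomial.C iX, MvPolynomial.C negX} : Set (MvPolynomial (Fin 2) Rsub))}
    = 1 := by
  have mem_one : 1 ∈ {n : ℕ | ∃ rs : List (MvPolynomial (Fin 2) Rsub), rs.length = n ∧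
      RingTheory.Sequence.IsRegular (MvPolynomial (Fin 2) Rsub) rs ∧ ∀ x ∈ rs,
        x ∈ Ideal.span ({MvPolynomial.C iX, MvPolynomial.C negX} : Set (MvPolynomial (Fin 2) Rsub))} := by
    refine ⟨[A₀], rfl, isRegular_singleton_A, ?_⟩
    intro x hx
    rw [List.mem_singleton] at hx
    subst hx
    exact Ideal.subset_span (Set.mem_insert _ _)
  have bound : ∀ n ∈ {n : ℕ | ∃ rs : List (MvPolynomial (Fin 2) Rsub), rs.length = n ∧
      RingTheory.Sequence.IsRegular (MvPolynomial (Fin 2) Rsub) rs ∧ ∀ x ∈ rs,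
        x ∈ Ideal.span ({MvPolynomial.C iX, MvPolynomial.C negX} : Set (MvPolynomial (Fin 2) Rsub))},
      n ≤ 1 := by
    rintro n ⟨rs, hlen, hreg, hmem⟩
    by_contra hn
    push_neg at hn
    rcases rs with _ | ⟨a, _ | ⟨b, t⟩⟩
    · simp only [List.length_nil] at hlen; omega
    · simp only [List.length_singleton] at hlen; omega
    · rw [RingTheory.Sequence.isRegular_cons_iff] at hreg
      obtain ⟨ha, hrest⟩ := hreg
      rw [RingTheory.Sequence.isRegular_cons_iff] at hrest
      obtain ⟨hb, -⟩ := hrest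
      exact no_two a b (hmem a (by simp)) (hmem b (by simp)) ha hb
  exact le_antisymm (csSup_le ⟨1, mem_one⟩ bound) (le_csSup ⟨1, bound⟩ mem_one)

/-- The Bhatwadekar–Dutta example: `D` is a locally nilpotent `R`-derivation of
`B = R[Y,Z]`, the ideal `D(B)B` equals `(iX, -X)B`, it is a proper ideal of `B`, and its
grade on `B` is `1`. -/
theorem bhatwadekar_dutta_example :
    (∀ b, ∃ n : ℕ, (Dder.toLinearMap ^ n) b = 0) ∧
      (Ideal.span (Set.range (Dder : MvPolynomial (Fin 2) Rsub → MvPolynomial (Fin 2) Rsub)) =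
        Ideal.span ({MvPolynomial.C iX, MvPolynomial.C negX} : Set (MvPolynomial (Fin 2) Rsub))) ∧
      Ideal.span (Set.range (Dder : MvPolynomial (Fin 2) Rsub → MvPolynomial (Fin 2) Rsub)) ≠ ⊤ ∧
      Ideal.grade (S := MvPolynomial (Fin 2) Rsub)
        (Ideal.span (Set.range (Dder : MvPolynomial (Fin 2) Rsub → MvPolynomial (Fin 2) Rsub)))
        = 1 := by
  have hne : Ideal.span (Set.range (Dder : MvPolynomial (Fin 2) Rsub → MvPolynomial (Fin 2) Rsub)) ≠ ⊤ := by
    rw [span_eq]; exact span_ne_top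
  refine ⟨locally_nilpotent, span_eq, hne, ?_⟩
  unfold Ideal.grade
  rw [if_neg hne, span_eq, grade_aux]
  rfl


end
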